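/- P is a pseudo-triangular basis of fuzzy sets if and only if the map T_P : [0,1] → [0,1]^n, t ↦ (f_1(t),…,f_n(t)), is injective and its range is a Hamiltonian path on the 1-skeleton of Δ_n, i.e., equals ⋃_{i=1}^{n−1} conv{e_{π(i)}, e_{π(i+1)}} for some permutation π of {1,…,n}. -/

import Mathlib

open Set
variable {n : ℕ}

noncomputable def Vv (π : Equiv.Perm (Fin n)) (i : Fin n) : EuclideanSpace ℝ (Fin n) :=
  EuclideanSpace.single (π i) 1

noncomputable def Phi (π : Equiv.Perm (Fin n)) (p : EuclideanSpace ℝ (Fin n)) : ℝ :=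
  ∑ k : Fin n, ((k:ℕ) : ℝ) * p (π k)

lemma coord (π : Equiv.Perm (Fin n)) (i j : Fin n) (a : ℝ) (k : Fin n) :
    ((a • Vv π i + (1-a) • Vv π j : EuclideanSpace ℝ (Fin n))) (π k)
      = (if k = i then a else 0) + (if k = j then 1-a else 0) := by
  simp [Vv, EuclideanSpace.single_apply, EmbeddingLike.apply_eq_iff_eq, mul_ite]

lemma Phi_rep (π : Equiv.Perm (Fin n)) (i j : Fin n) (a : ℝ) :
    Phi π (a • Vv π i + (1-a) • Vv π j) = a * ((i:ℕ):ℝ) + (1-a) * ((j:ℕ):ℝ) := by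
  simp only [Phi, coord, mul_add, mul_ite, mul_zero, Finset.sum_add_distrib]
  rw [Finset.sum_ite_eq' Finset.univ i, Finset.sum_ite_eq' Finset.univ j]
  simp [mul_comm]

lemma sum_coord (π : Equiv.Perm (Fin n)) (i j : Fin n) (a : ℝ) :
    ∑ k : Fin n, (a • Vv π i + (1-a) • Vv π j : EuclideanSpace ℝ (Fin n)) k = 1 := by
  rw [← Equiv.sum_comp π (fun k => (a • Vv π i + (1-a) • Vv π j : EuclideanSpace ℝ (Fin n)) k)]
  simp only [coord, Finset.sum_add_distrib, Finset.sum_ite_eq' Finset.univ]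
  simp

lemma vv_rep (π : Equiv.Perm (Fin n)) (i : Fin n) :
    Vv π i = (1:ℝ) • Vv π i + (1-1) • Vv π i := by simp

lemma Phi_vertex (π : Equiv.Perm (Fin n)) (i : Fin n) :
    Phi π (Vv π i) = ((i:ℕ):ℝ) := by
  unfold Phi Vv
  simp only [EuclideanSpace.single_apply, EmbeddingLike.apply_eq_iff_eq, mul_ite, mul_one,
    mul_zero]
  rw [Finset.sum_ite_eq' Finset.univ i]
  simp

lemma pin (π : Equiv.Perm (Fin n)) {i j : Fin n} (hi : (i:ℕ)+1 < n) (hj : (j:ℕ)+1 < n)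
    {a c : ℝ} (ha : a ∈ Icc (0:ℝ) 1) (hc : c = ((j:ℕ):ℝ) + 1 - a)
    (hci : ((i:ℕ):ℝ) ≤ c) (hci' : c ≤ ((i:ℕ):ℝ)+1) :
    a • Vv π j + (1-a) • Vv π ⟨(j:ℕ)+1, hj⟩
      = (((i:ℕ):ℝ)+1-c) • Vv π i + (c - ((i:ℕ):ℝ)) • Vv π ⟨(i:ℕ)+1, hi⟩ := by
  obtain ⟨ha0, ha1⟩ := ha
  rcases lt_trichotomy (j:ℕ) (i:ℕ) with h | h | h
  · have hji : ((j:ℕ):ℝ) + 1 ≤ ((i:ℕ):ℝ) := by exact_mod_cast Nat.succ_le_of_lt h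
    have hc_eq : c = ((i:ℕ):ℝ) := le_antisymm (by linarith) hci
    have ha_eq : a = 0 := by linarith
    have hji' : (j:ℕ) + 1 = (i:ℕ) := by
      have : ((j:ℕ):ℝ) + 1 = ((i:ℕ):ℝ) := by linarith
      exact_mod_cast this
    have hfin : (⟨(j:ℕ)+1, hj⟩ : Fin n) = i := Fin.ext hji'
    rw [hfin, ha_eq, hc_eq]; simp
  · have hfin : j = i := Fin.ext h
    have hfin' : (⟨(j:ℕ)+1, hj⟩ : Fin n) = ⟨(i:ℕ)+1, hi⟩ := Fin.ext (by simp [h])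
    have h1 : ((i:ℕ):ℝ)+1-c = a := by rw [hc, h]; ring
    have h2 : c - ((i:ℕ):ℝ) = 1 - a := by rw [hc, h]; ring
    subst hfin
    rw [hfin', h1, h2]
  · have hij : ((i:ℕ):ℝ) + 1 ≤ ((j:ℕ):ℝ) := by exact_mod_cast Nat.succ_le_of_lt h
    have hc_eq : c = ((i:ℕ):ℝ) + 1 := le_antisymm hci' (by linarith)
    have ha_eq : a = 1 := by linarith
    have hij' : (i:ℕ) + 1 = (j:ℕ) := by
      have : ((i:ℕ):ℝ) + 1 = ((j:ℕ):ℝ) := by linarith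
      exact_mod_cast this
    have hfin : (⟨(i:ℕ)+1, hi⟩ : Fin n) = j := Fin.ext hij'
    rw [hfin, ha_eq, hc_eq]; simp

lemma exists_interval (hn : 2 ≤ n) (t : Fin n → ℝ) (ht : Monotone t) {x : ℝ}
    (hx0 : t ⟨0, lt_of_lt_of_le two_pos hn⟩ ≤ x) (hx1 : x ≤ t ⟨n-1, Nat.sub_lt (lt_of_lt_of_le two_pos hn) one_pos⟩) :
    ∃ (i : Fin n) (hi : (i:ℕ)+1 < n), x ∈ Icc (t i) (t ⟨(i:ℕ)+1, hi⟩) := by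
  suffices H : ∀ k (hk : k < n), x ≤ t ⟨k, hk⟩ →
      ∃ (i : Fin n) (hi : (i:ℕ)+1 < n), x ∈ Icc (t i) (t ⟨(i:ℕ)+1, hi⟩) by
    exact H (n-1) (by omega) hx1
  intro k
  induction k with
  | zero =>
    intro hk hxk
    refine ⟨⟨0, by omega⟩, by show 0+1 < n; omega, hx0, ?_⟩
    exact hxk.trans (ht (by simp [Fin.le_def]))
  | succ m ih =>
    intro hk hxk
    by_cases hm : t ⟨m, by omega⟩ ≤ x
    · exact ⟨⟨m, by omega⟩, hk, hm, hxk⟩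
    · exact ih (by omega) (le_of_not_ge hm)

lemma forward (hn : 2 ≤ n) (f : Fin n → ℝ → ℝ)
    (hmap : ∀ i, Set.MapsTo (f i) (Set.Icc 0 1) (Set.Icc 0 1))
    (σ : Equiv.Perm (Fin n)) (t : Fin n → ℝ)
    (htm : StrictMono t) (ht0 : t ⟨0, lt_of_lt_of_le two_pos hn⟩ = 0) (ht1 : t ⟨n - 1, Nat.sub_lt (lt_of_lt_of_le two_pos hn) one_pos⟩ = 1)
    (hc : ∀ i : Fin n, ∀ hi : (i : ℕ) + 1 < n,
        (f (σ i) (t i) = 1 ∧ f (σ i) (t ⟨(i : ℕ) + 1, hi⟩) = 0) ∧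
        (∀ j : Fin n, j ≠ i → j ≠ ⟨(i : ℕ) + 1, hi⟩ →
          ∀ x ∈ Set.Icc (t i) (t ⟨(i : ℕ) + 1, hi⟩), f (σ j) x = 0) ∧
        (∀ x ∈ Set.Icc (t i) (t ⟨(i : ℕ) + 1, hi⟩),
          f (σ ⟨(i : ℕ) + 1, hi⟩) x = 1 - f (σ i) x) ∧
        (Set.BijOn (f (σ i)) (Set.Icc (t i) (t ⟨(i : ℕ) + 1, hi⟩)) (Set.Icc 0 1) ∧
         Set.BijOn (f (σ ⟨(i : ℕ) + 1, hi⟩))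
           (Set.Icc (t i) (t ⟨(i : ℕ) + 1, hi⟩)) (Set.Icc 0 1))) :
    Set.InjOn (fun x => (WithLp.toLp 2 (fun i => f i x) : EuclideanSpace ℝ (Fin n))) (Set.Icc 0 1) ∧
    (fun x => (WithLp.toLp 2 (fun i => f i x) : EuclideanSpace ℝ (Fin n))) '' (Set.Icc 0 1) =
      ⋃ i : Fin n, ⋃ hi : (i : ℕ) + 1 < n,
        segment ℝ (EuclideanSpace.single (σ i) 1)
          (EuclideanSpace.single (σ ⟨(i : ℕ) + 1, hi⟩) 1) := by
  have hle : ∀ (i : Fin n) (hi : (i:ℕ)+1 < n), t i < t ⟨(i:ℕ)+1, hi⟩ := by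
    intro i hi; exact htm (by simp [Fin.lt_def])
  have hsub : ∀ (i : Fin n) (hi : (i:ℕ)+1 < n),
      Icc (t i) (t ⟨(i:ℕ)+1, hi⟩) ⊆ Icc (0:ℝ) 1 := by
    intro i hi
    rw [← ht0, ← ht1]
    exact Icc_subset_Icc (htm.monotone (by simp [Fin.le_def]))
      (htm.monotone (by simp [Fin.le_def]; omega))
  have F : ∀ (i : Fin n) (hi : (i:ℕ)+1 < n), ∀ x ∈ Icc (t i) (t ⟨(i:ℕ)+1, hi⟩),
      (WithLp.toLp 2 (fun j => f j x) : EuclideanSpace ℝ (Fin n))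
        = (f (σ i) x) • Vv σ i + (1 - f (σ i) x) • Vv σ ⟨(i:ℕ)+1, hi⟩ := by
    intro i hi x hx
    ext j
    obtain ⟨k, rfl⟩ : ∃ k, j = σ k := ⟨σ.symm j, (σ.apply_symm_apply j).symm⟩
    show f (σ k) x = _
    rw [coord]
    by_cases hki : k = i
    · subst hki
      rw [if_pos rfl, if_neg (by simp [Fin.ext_iff]), add_zero]
    · by_cases hki' : k = ⟨(i:ℕ)+1, hi⟩
      · subst hki'
        rw [if_neg hki, if_pos rfl, zero_add]
        exact (hc i hi).2.2.1 x hx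
      · rw [if_neg hki, if_neg hki', add_zero]
        exact (hc i hi).2.1 k hki hki' x hx
  have hint : ∀ x ∈ Icc (0:ℝ) 1, ∃ (i : Fin n) (hi : (i:ℕ)+1 < n),
      x ∈ Icc (t i) (t ⟨(i:ℕ)+1, hi⟩) := by
    intro x hx
    exact exists_interval hn t htm.monotone (ht0 ▸ hx.1) (ht1 ▸ hx.2)
  have haux : ∀ (i j : Fin n) (hi : (i:ℕ)+1 < n) (hj : (j:ℕ)+1 < n) (x y : ℝ),
      x ∈ Icc (t i) (t ⟨(i:ℕ)+1, hi⟩) → y ∈ Icc (t j) (t ⟨(j:ℕ)+1, hj⟩) →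
      (i:ℕ) < (j:ℕ) → (∀ k, f k x = f k y) → x = y := by
    intro i j hi hj x y hx hy hij hfeq
    obtain ⟨⟨hi1, hi0⟩, hiz, hicomp, hibij, _⟩ := hc i hi
    obtain ⟨⟨hj1, hj0⟩, hjz, hjcomp, hjbij, _⟩ := hc j hj
    have h1 : f (σ i) y = 0 :=
      hjz i (Fin.ne_of_val_ne (by omega)) (Fin.ne_of_val_ne (by simp; omega)) y hy
    have hx1 : x = t ⟨(i:ℕ)+1, hi⟩ := by
      apply hibij.injOn hx (right_mem_Icc.mpr (hle i hi).le)
      rw [hi0, hfeq (σ i), h1]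
    have h2 : f (σ ⟨(i:ℕ)+1, hi⟩) x = 1 := by
      rw [hicomp x hx, hfeq (σ i), h1]; ring
    rcases eq_or_lt_of_le (Nat.succ_le_of_lt hij) with heq | hlt
    · have hfin : (⟨(i:ℕ)+1, hi⟩ : Fin n) = j := Fin.ext heq
      have h3 : f (σ j) y = 1 := by rw [← hfeq (σ j), ← hfin]; exact h2
      have hy1 : y = t j := by
        apply hjbij.injOn hy (left_mem_Icc.mpr (hle j hj).le)
        rw [h3, hj1]
      rw [hx1, hy1, hfin]
    · exfalso
      have h3 : f (σ ⟨(i:ℕ)+1, hi⟩) y = 0 :=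
        hjz _ (Fin.ne_of_val_ne (by simp; omega)) (Fin.ne_of_val_ne (by simp; omega)) y hy
      rw [hfeq (σ ⟨(i:ℕ)+1, hi⟩), h3] at h2
      norm_num at h2
  constructor
  · intro x hx y hy hxy
    have hfeq : ∀ k, f k x = f k y := fun k => congrArg (fun p : EuclideanSpace ℝ (Fin n) => p k) hxy
    obtain ⟨i, hi, hxi⟩ := hint x hx
    obtain ⟨j, hj, hyj⟩ := hint y hy
    rcases Nat.lt_trichotomy (i:ℕ) (j:ℕ) with h | h | h
    · exact haux i j hi hj x y hxi hyj h hfeq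
    · have : i = j := Fin.ext h
      subst this
      exact (hc i hi).2.2.2.1.injOn hxi hyj (hfeq (σ i))
    · exact (haux j i hj hi y x hyj hxi h (fun k => (hfeq k).symm)).symm
  · apply Subset.antisymm
    · rintro p ⟨x, hx, rfl⟩
      obtain ⟨i, hi, hxi⟩ := hint x hx
      refine mem_iUnion.mpr ⟨i, mem_iUnion.mpr ⟨hi, ?_⟩⟩
      show (WithLp.toLp 2 (fun j => f j x) : EuclideanSpace ℝ (Fin n)) ∈ _
      rw [F i hi x hxi]
      have ha := hmap (σ i) (hsub i hi hxi)
      exact ⟨f (σ i) x, 1 - f (σ i) x, ha.1, by linarith [ha.2], by ring, rfl⟩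
    · intro p hp
      simp only [mem_iUnion] at hp
      obtain ⟨i, hi, a, b, ha, hb, hab, rfl⟩ := hp
      have hb' : b = 1 - a := by linarith
      subst hb'
      obtain ⟨x, hxi, hfx⟩ := (hc i hi).2.2.2.1.surjOn ⟨ha, by linarith⟩
      refine ⟨x, hsub i hi hxi, ?_⟩
      show (WithLp.toLp 2 (fun j => f j x) : EuclideanSpace ℝ (Fin n)) = _
      rw [F i hi x hxi, hfx]
      rfl

lemma repP (f : Fin n → ℝ → ℝ) (π : Equiv.Perm (Fin n))
    (him : (fun x => (WithLp.toLp 2 (fun i => f i x) : EuclideanSpace ℝ (Fin n))) '' (Set.Icc 0 1) =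
      ⋃ i : Fin n, ⋃ hi : (i : ℕ) + 1 < n,
        segment ℝ (EuclideanSpace.single (π i) 1)
          (EuclideanSpace.single (π ⟨(i : ℕ) + 1, hi⟩) 1)) :
    ∀ x ∈ Icc (0:ℝ) 1, ∃ (j : Fin n) (hj : (j:ℕ)+1 < n) (a : ℝ), a ∈ Icc (0:ℝ) 1 ∧
      (WithLp.toLp 2 (fun i => f i x) : EuclideanSpace ℝ (Fin n)) = a • Vv π j + (1-a) • Vv π ⟨(j:ℕ)+1, hj⟩ := by
  intro x hx
  have hmem : (WithLp.toLp 2 (fun i => f i x) : EuclideanSpace ℝ (Fin n)) ∈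
      ⋃ i : Fin n, ⋃ hi : (i : ℕ) + 1 < n,
        segment ℝ (EuclideanSpace.single (π i) 1)
          (EuclideanSpace.single (π ⟨(i : ℕ) + 1, hi⟩) 1) := by
    rw [← him]; exact mem_image_of_mem _ hx
  simp only [mem_iUnion] at hmem
  obtain ⟨j, hj, a, b, ha, hb, hab, heq⟩ := hmem
  have hba : b = 1 - a := by linarith
  subst hba
  exact ⟨j, hj, a, ⟨ha, by linarith⟩, heq.symm⟩

lemma pinP (π : Equiv.Perm (Fin n)) {i j : Fin n} (hi : (i:ℕ)+1 < n) (hj : (j:ℕ)+1 < n)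
    {a : ℝ} (ha : a ∈ Icc (0:ℝ) 1) {p : EuclideanSpace ℝ (Fin n)}
    (hp : p = a • Vv π j + (1-a) • Vv π ⟨(j:ℕ)+1, hj⟩)
    (h1 : ((i:ℕ):ℝ) ≤ Phi π p) (h2 : Phi π p ≤ ((i:ℕ):ℝ)+1) :
    p = (((i:ℕ):ℝ)+1-Phi π p) • Vv π i + (Phi π p - ((i:ℕ):ℝ)) • Vv π ⟨(i:ℕ)+1, hi⟩ := by
  have hval : ((⟨(j:ℕ)+1, hj⟩ : Fin n) : ℕ) = (j:ℕ)+1 := rfl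
  have hPhi : Phi π p = ((j:ℕ):ℝ)+1-a := by
    rw [hp, Phi_rep, hval]; push_cast; ring
  have := pin π hi hj ha hPhi h1 h2
  conv_lhs => rw [hp]
  exact this

def revPerm (n : ℕ) : Equiv.Perm (Fin n) :=
  Function.Involutive.toPerm (fun i => ⟨n-1-(i:ℕ), by have := i.isLt; omega⟩)
    (fun i => Fin.ext (by have := i.isLt; show n-1-(n-1-(i:ℕ)) = (i:ℕ); omega))

lemma revPerm_apply (i : Fin n) :
    revPerm n i = ⟨n-1-(i:ℕ), by have := i.isLt; omega⟩ := rfl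

lemma rev_union (hn : 2 ≤ n) (π : Equiv.Perm (Fin n)) :
    (⋃ i : Fin n, ⋃ hi : (i : ℕ) + 1 < n,
        segment ℝ (EuclideanSpace.single (((revPerm n).trans π) i) (1:ℝ))
          (EuclideanSpace.single (((revPerm n).trans π) ⟨(i : ℕ) + 1, hi⟩) (1:ℝ)))
      = ⋃ i : Fin n, ⋃ hi : (i : ℕ) + 1 < n,
        segment ℝ (EuclideanSpace.single (π i) (1:ℝ))
          (EuclideanSpace.single (π ⟨(i : ℕ) + 1, hi⟩) (1:ℝ)) := by
  have happ : ∀ k : Fin n, ((revPerm n).trans π) k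
      = π ⟨n-1-(k:ℕ), by have := k.isLt; omega⟩ := fun k => rfl
  ext p
  simp only [mem_iUnion]
  constructor
  · rintro ⟨i, hi, hp⟩
    have hlt := i.isLt
    refine ⟨⟨n-2-(i:ℕ), by omega⟩, by show n-2-(i:ℕ)+1 < n; omega, ?_⟩
    rw [segment_symm]
    have e1 : ((revPerm n).trans π) i
        = π ⟨(n-2-(i:ℕ))+1, by show n-2-(i:ℕ)+1 < n; omega⟩ := by
      rw [happ]; exact congrArg π (Fin.ext (by show n-1-(i:ℕ) = n-2-(i:ℕ)+1; omega))
    have e2 : ((revPerm n).trans π) ⟨(i:ℕ)+1, hi⟩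
        = π ⟨n-2-(i:ℕ), by omega⟩ := by
      rw [happ]; exact congrArg π (Fin.ext (by show n-1-((i:ℕ)+1) = n-2-(i:ℕ); omega))
    rw [← e1, ← e2]
    exact hp
  · rintro ⟨j, hj, hp⟩
    have hlt := j.isLt
    refine ⟨⟨n-2-(j:ℕ), by omega⟩, by show n-2-(j:ℕ)+1 < n; omega, ?_⟩
    rw [segment_symm]
    have e1 : ((revPerm n).trans π) ⟨n-2-(j:ℕ), by omega⟩
        = π ⟨(j:ℕ)+1, hj⟩ := by
      rw [happ]; exact congrArg π (Fin.ext (by show n-1-(n-2-(j:ℕ)) = (j:ℕ)+1; omega))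
    have e2 : ((revPerm n).trans π) ⟨(n-2-(j:ℕ))+1, by show n-2-(j:ℕ)+1 < n; omega⟩
        = π ⟨(j:ℕ), j.isLt⟩ := by
      rw [happ]; exact congrArg π (Fin.ext (by show n-1-(n-2-(j:ℕ)+1) = (j:ℕ); omega))
    rw [e1, e2]
    have : (⟨(j:ℕ), j.isLt⟩ : Fin n) = j := Fin.ext rfl
    rw [this]
    exact hp

lemma phi_rev (hn : 2 ≤ n) (π : Equiv.Perm (Fin n)) (p : EuclideanSpace ℝ (Fin n))
    (hsum : ∑ k : Fin n, p k = 1) :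
    Phi ((revPerm n).trans π) p = ((n:ℝ)-1) - Phi π p := by
  have happ : ∀ k : Fin n, ((revPerm n).trans π) k
      = π (revPerm n k) := fun k => rfl
  have hinv : ∀ k : Fin n, revPerm n (revPerm n k) = k :=
    fun k => Fin.ext (by have := k.isLt; show n-1-(n-1-(k:ℕ)) = (k:ℕ); omega)
  have h1 : Phi ((revPerm n).trans π) p
      = ∑ k : Fin n, (((revPerm n (revPerm n k)):ℕ):ℝ) * p (π (revPerm n k)) := by
    unfold Phi
    exact Finset.sum_congr rfl (fun k _ => by rw [hinv k, happ])
  rw [h1, Equiv.sum_comp (revPerm n) (fun m => (((revPerm n m):ℕ):ℝ) * p (π m))]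
  have h2 : ∀ m : Fin n, (((revPerm n m):ℕ):ℝ) = ((n:ℝ)-1) - ((m:ℕ):ℝ) := by
    intro m
    have := m.isLt
    rw [revPerm_apply]
    show (((n-1-(m:ℕ) : ℕ)):ℝ) = _
    rw [Nat.cast_sub (by omega), Nat.cast_sub (by omega)]
    norm_num
  have h3 : ∑ m : Fin n, p (π m) = 1 := by
    rw [Equiv.sum_comp π (fun k => p k)]; exact hsum
  calc ∑ m : Fin n, (((revPerm n m):ℕ):ℝ) * p (π m)
      = ∑ m : Fin n, ((((n:ℝ)-1) - ((m:ℕ):ℝ)) * p (π m)) :=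
        Finset.sum_congr rfl (fun m _ => by rw [h2 m])
    _ = ((n:ℝ)-1) * (∑ m : Fin n, p (π m)) - ∑ m : Fin n, ((m:ℕ):ℝ) * p (π m) := by
        rw [Finset.mul_sum, ← Finset.sum_sub_distrib]
        exact Finset.sum_congr rfl (fun m _ => by ring)
    _ = ((n:ℝ)-1) - Phi π p := by rw [h3]; unfold Phi; ring

lemma backward_mono (hn : 2 ≤ n) (f : Fin n → ℝ → ℝ)
    (hcont : ∀ i, ContinuousOn (f i) (Set.Icc 0 1))
    (π : Equiv.Perm (Fin n))
    (hinj : Set.InjOn (fun x => (WithLp.toLp 2 (fun i => f i x) : EuclideanSpace ℝ (Fin n))) (Set.Icc 0 1))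
    (him : (fun x => (WithLp.toLp 2 (fun i => f i x) : EuclideanSpace ℝ (Fin n))) '' (Set.Icc 0 1) =
      ⋃ i : Fin n, ⋃ hi : (i : ℕ) + 1 < n,
        segment ℝ (EuclideanSpace.single (π i) 1)
          (EuclideanSpace.single (π ⟨(i : ℕ) + 1, hi⟩) 1))
    (hmono : StrictMonoOn (fun x => Phi π (WithLp.toLp 2 (fun i => f i x))) (Set.Icc 0 1)) :
    ∃ t : Fin n → ℝ,
      StrictMono t ∧ t ⟨0, lt_of_lt_of_le two_pos hn⟩ = 0 ∧ t ⟨n - 1, Nat.sub_lt (lt_of_lt_of_le two_pos hn) one_pos⟩ = 1 ∧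
      ∀ i : Fin n, ∀ hi : (i : ℕ) + 1 < n,
        (f (π i) (t i) = 1 ∧ f (π i) (t ⟨(i : ℕ) + 1, hi⟩) = 0) ∧
        (∀ j : Fin n, j ≠ i → j ≠ ⟨(i : ℕ) + 1, hi⟩ →
          ∀ x ∈ Set.Icc (t i) (t ⟨(i : ℕ) + 1, hi⟩), f (π j) x = 0) ∧
        (∀ x ∈ Set.Icc (t i) (t ⟨(i : ℕ) + 1, hi⟩),
          f (π ⟨(i : ℕ) + 1, hi⟩) x = 1 - f (π i) x) ∧
        (Set.BijOn (f (π i)) (Set.Icc (t i) (t ⟨(i : ℕ) + 1, hi⟩)) (Set.Icc 0 1) ∧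
         Set.BijOn (f (π ⟨(i : ℕ) + 1, hi⟩))
           (Set.Icc (t i) (t ⟨(i : ℕ) + 1, hi⟩)) (Set.Icc 0 1)) := by
  set h : ℝ → ℝ := fun x => Phi π (WithLp.toLp 2 (fun i => f i x)) with hh
  have hrep := repP f π him
  have hcPhi : ContinuousOn h (Icc 0 1) := by
    apply continuousOn_finset_sum
    intro k _
    exact (continuousOn_const.mul (hcont (π k)))
  -- h x computed from rep
  have hval : ∀ x ∈ Icc (0:ℝ) 1, ∀ (j : Fin n) (hj : (j:ℕ)+1 < n) (a : ℝ),
      (WithLp.toLp 2 (fun i => f i x) : EuclideanSpace ℝ (Fin n)) = a • Vv π j + (1-a) • Vv π ⟨(j:ℕ)+1, hj⟩ →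
      h x = ((j:ℕ):ℝ)+1-a := by
    intro x hx j hj a heq
    have hv : ((⟨(j:ℕ)+1, hj⟩ : Fin n) : ℕ) = (j:ℕ)+1 := rfl
    rw [hh]
    show Phi π (WithLp.toLp 2 (fun i => f i x)) = _
    rw [heq, Phi_rep, hv]
    push_cast; ring
  have hbound : ∀ x ∈ Icc (0:ℝ) 1, 0 ≤ h x ∧ h x ≤ (n:ℝ)-1 := by
    intro x hx
    obtain ⟨j, hj, a, ha, heq⟩ := hrep x hx
    rw [hval x hx j hj a heq]
    have h1 : (j:ℕ)+1 ≤ n-1 := by omega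
    have h2 : ((j:ℕ):ℝ)+1 ≤ (n:ℝ)-1 := by
      have := (Nat.cast_le (α := ℝ)).mpr h1
      rw [Nat.cast_sub (by omega)] at this
      push_cast at this ⊢
      linarith
    constructor <;> [linarith [ha.2]; linarith [ha.1]]
  -- existence of node preimages
  have hs : ∀ i : Fin n, ∃ x, x ∈ Icc (0:ℝ) 1 ∧ h x = ((i:ℕ):ℝ) ∧
      (WithLp.toLp 2 (fun k => f k x) : EuclideanSpace ℝ (Fin n)) = Vv π i := by
    intro i
    have hmem : Vv π i ∈ ⋃ j : Fin n, ⋃ hj : (j : ℕ) + 1 < n,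
        segment ℝ (EuclideanSpace.single (π j) 1)
          (EuclideanSpace.single (π ⟨(j : ℕ) + 1, hj⟩) 1) := by
      by_cases hi : (i:ℕ)+1 < n
      · refine mem_iUnion.mpr ⟨i, mem_iUnion.mpr ⟨hi, ?_⟩⟩
        exact ⟨1, 0, zero_le_one, le_refl 0, by ring, by simp [Vv]⟩
      · have hieq : (i:ℕ) = n-1 := by have := i.isLt; omega
        refine mem_iUnion.mpr ⟨⟨n-2, by omega⟩, mem_iUnion.mpr
          ⟨by show n-2+1 < n; omega, ?_⟩⟩
        refine ⟨0, 1, le_refl 0, zero_le_one, by ring, ?_⟩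
        have : (⟨(n-2)+1, by show n-2+1<n; omega⟩ : Fin n) = i :=
          Fin.ext (by show n-2+1 = (i:ℕ); omega)
        rw [this]
        simp [Vv]
      -- done
    rw [← him] at hmem
    obtain ⟨x, hx, heq⟩ := hmem
    have heq2 : (WithLp.toLp 2 (fun k => f k x) : EuclideanSpace ℝ (Fin n)) = Vv π i := heq
    refine ⟨x, hx, ?_, heq2⟩
    show Phi π (WithLp.toLp 2 (fun k => f k x)) = _
    rw [heq2, Phi_vertex]
  choose s hsI hsh hsT using hs
  have smono : StrictMono s := by
    intro i j hij
    rcases lt_trichotomy (s i) (s j) with hlt | heq | hgt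
    · exact hlt
    · exfalso
      have : ((i:ℕ):ℝ) = ((j:ℕ):ℝ) := by rw [← hsh i, ← hsh j, heq]
      have : (i:ℕ) = (j:ℕ) := by exact_mod_cast this
      omega
    · exfalso
      have := hmono (hsI j) (hsI i) hgt
      rw [hsh i, hsh j] at this
      have : (j:ℕ) < (i:ℕ) := by exact_mod_cast this
      omega
  have s0 : s ⟨0, by omega⟩ = 0 := by
    have h0I : (0:ℝ) ∈ Icc (0:ℝ) 1 := left_mem_Icc.mpr zero_le_one
    have hb := (hbound 0 h0I).1
    have hs0 := hsh ⟨0, by omega⟩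
    have hs0' : h (s ⟨0, by omega⟩) = 0 := by rw [hs0]; norm_num
    rcases lt_trichotomy (s ⟨0, by omega⟩) 0 with hlt | heq | hgt
    · exact absurd hlt (not_lt.mpr (hsI _).1)
    · exact heq
    · exfalso
      have := hmono h0I (hsI _) hgt
      rw [hs0'] at this
      linarith
  have s1 : s ⟨n-1, by omega⟩ = 1 := by
    have h1I : (1:ℝ) ∈ Icc (0:ℝ) 1 := right_mem_Icc.mpr zero_le_one
    have hb := (hbound 1 h1I).2
    have hs1' : h (s ⟨n-1, by omega⟩) = (n:ℝ)-1 := by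
      rw [hsh]
      show (((n-1:ℕ)):ℝ) = (n:ℝ)-1
      rw [Nat.cast_sub (by omega)]; norm_num
    rcases lt_trichotomy (s ⟨n-1, by omega⟩) 1 with hlt | heq | hgt
    · exfalso
      have := hmono (hsI _) h1I hlt
      rw [hs1'] at this
      linarith
    · exact heq
    · exact absurd hgt (not_lt.mpr (hsI _).2)
  refine ⟨s, smono, s0, s1, ?_⟩
  intro i hi
  set i1 : Fin n := ⟨(i:ℕ)+1, hi⟩ with hi1
  have hne : i ≠ i1 := Fin.ne_of_val_ne (by simp [hi1])
  have hne' : i1 ≠ i := hne.symm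
  have hlt : s i < s i1 := smono (by simp [Fin.lt_def, hi1])
  have hJsub : Icc (s i) (s i1) ⊆ Icc (0:ℝ) 1 := by
    intro x hx
    exact ⟨le_trans (hsI i).1 hx.1, le_trans hx.2 (hsI i1).2⟩
  have hsh1 : h (s i1) = ((i:ℕ):ℝ)+1 := by
    rw [hsh i1]
    show (((i:ℕ)+1 : ℕ):ℝ) = _
    push_cast; ring
  have hhx : ∀ x ∈ Icc (s i) (s i1), ((i:ℕ):ℝ) ≤ h x ∧ h x ≤ ((i:ℕ):ℝ)+1 := by
    intro x hx
    constructor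
    · rw [← hsh i]
      exact hmono.monotoneOn (hsI i) (hJsub hx) hx.1
    · rw [← hsh1]
      exact hmono.monotoneOn (hJsub hx) (hsI i1) hx.2
  have hcoords : ∀ x ∈ Icc (s i) (s i1), ∀ k : Fin n,
      f (π k) x = (if k = i then ((i:ℕ):ℝ)+1-h x else 0)
        + (if k = i1 then h x - ((i:ℕ):ℝ) else 0) := by
    intro x hx k
    obtain ⟨j, hj, a, ha, heq⟩ := hrep x (hJsub hx)
    have hpin := pinP π hi hj ha heq ((hhx x hx).1) ((hhx x hx).2)
    have hc : f (π k) x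
        = ((((i:ℕ):ℝ)+1-Phi π (WithLp.toLp 2 (fun m => f m x))) • Vv π i
          + (Phi π (WithLp.toLp 2 (fun m => f m x)) - ((i:ℕ):ℝ)) • Vv π i1 : EuclideanSpace ℝ (Fin n)) (π k) :=
      congrArg (fun p : EuclideanSpace ℝ (Fin n) => p (π k)) hpin
    rw [hc]
    have hb : (Phi π (WithLp.toLp 2 (fun m => f m x)) - ((i:ℕ):ℝ))
        = 1 - (((i:ℕ):ℝ)+1-Phi π (WithLp.toLp 2 (fun m => f m x))) := by ring
    rw [hb, coord]
  have hhcJ : ContinuousOn h (Icc (s i) (s i1)) := hcPhi.mono hJsub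
  have hmemL : s i ∈ Icc (s i) (s i1) := left_mem_Icc.mpr hlt.le
  have hmemR : s i1 ∈ Icc (s i) (s i1) := right_mem_Icc.mpr hlt.le
  have hfieq : ∀ x ∈ Icc (s i) (s i1), f (π i) x = ((i:ℕ):ℝ)+1-h x := by
    intro x hx
    rw [hcoords x hx i, if_pos rfl, if_neg hne, add_zero]
  have hfi1eq : ∀ x ∈ Icc (s i) (s i1), f (π i1) x = h x - ((i:ℕ):ℝ) := by
    intro x hx
    rw [hcoords x hx i1, if_pos rfl, if_neg hne', zero_add]
  refine ⟨⟨?_, ?_⟩, ?_, ?_, ?_, ?_⟩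
  · rw [hfieq (s i) hmemL, hsh i]; ring
  · rw [hfieq (s i1) hmemR, hsh1]; ring
  · intro j hji hji1 x hx
    rw [hcoords x hx j, if_neg hji, if_neg hji1, add_zero]
  · intro x hx
    rw [hfieq x hx, hfi1eq x hx]; ring
  · refine ⟨?_, ?_, ?_⟩
    · intro x hx
      rw [hfieq x hx]
      have := hhx x hx
      exact ⟨by linarith [this.2], by linarith [this.1]⟩
    · intro x hx y hy hxy
      rw [hfieq x hx, hfieq y hy] at hxy
      have : h x = h y := by linarith
      exact hmono.injOn (hJsub hx) (hJsub hy) this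
    · intro y hy
      have hcmem : ((i:ℕ):ℝ)+1-y ∈ Icc (h (s i)) (h (s i1)) := by
        rw [hsh i, hsh1]
        exact ⟨by linarith [hy.2], by linarith [hy.1]⟩
      obtain ⟨x, hxJ, hxc⟩ := intermediate_value_Icc hlt.le hhcJ hcmem
      exact ⟨x, hxJ, by rw [hfieq x hxJ, hxc]; ring⟩
  · refine ⟨?_, ?_, ?_⟩
    · intro x hx
      rw [hfi1eq x hx]
      have := hhx x hx
      exact ⟨by linarith [this.1], by linarith [this.2]⟩
    · intro x hx y hy hxy
      rw [hfi1eq x hx, hfi1eq y hy] at hxy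
      have : h x = h y := by linarith
      exact hmono.injOn (hJsub hx) (hJsub hy) this
    · intro y hy
      have hcmem : y + ((i:ℕ):ℝ) ∈ Icc (h (s i)) (h (s i1)) := by
        rw [hsh i, hsh1]
        exact ⟨by linarith [hy.1], by linarith [hy.2]⟩
      obtain ⟨x, hxJ, hxc⟩ := intermediate_value_Icc hlt.le hhcJ hcmem
      exact ⟨x, hxJ, by rw [hfi1eq x hxJ, hxc]; ring⟩

lemma stmt12_aux (hn : 2 ≤ n) (f : Fin n → ℝ → ℝ)
    (hcont : ∀ i, ContinuousOn (f i) (Set.Icc 0 1))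
    (hinj : Set.InjOn (fun x => (WithLp.toLp 2 (fun i => f i x) : EuclideanSpace ℝ (Fin n))) (Set.Icc 0 1))
    (π : Equiv.Perm (Fin n))
    (him : (fun x => (WithLp.toLp 2 (fun i => f i x) : EuclideanSpace ℝ (Fin n))) '' (Set.Icc 0 1) =
      ⋃ i : Fin n, ⋃ hi : (i : ℕ) + 1 < n,
        segment ℝ (EuclideanSpace.single (π i) 1)
          (EuclideanSpace.single (π ⟨(i : ℕ) + 1, hi⟩) 1)) :
    ∃ σ : Equiv.Perm (Fin n), ∃ t : Fin n → ℝ,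
      StrictMono t ∧ t ⟨0, lt_of_lt_of_le two_pos hn⟩ = 0 ∧ t ⟨n - 1, Nat.sub_lt (lt_of_lt_of_le two_pos hn) one_pos⟩ = 1 ∧
      ∀ i : Fin n, ∀ hi : (i : ℕ) + 1 < n,
        (f (σ i) (t i) = 1 ∧ f (σ i) (t ⟨(i : ℕ) + 1, hi⟩) = 0) ∧
        (∀ j : Fin n, j ≠ i → j ≠ ⟨(i : ℕ) + 1, hi⟩ →
          ∀ x ∈ Set.Icc (t i) (t ⟨(i : ℕ) + 1, hi⟩), f (σ j) x = 0) ∧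
        (∀ x ∈ Set.Icc (t i) (t ⟨(i : ℕ) + 1, hi⟩),
          f (σ ⟨(i : ℕ) + 1, hi⟩) x = 1 - f (σ i) x) ∧
        (Set.BijOn (f (σ i)) (Set.Icc (t i) (t ⟨(i : ℕ) + 1, hi⟩)) (Set.Icc 0 1) ∧
         Set.BijOn (f (σ ⟨(i : ℕ) + 1, hi⟩))
           (Set.Icc (t i) (t ⟨(i : ℕ) + 1, hi⟩)) (Set.Icc 0 1)) := by
  have hrep := repP f π him
  have hvalP : ∀ x ∈ Icc (0:ℝ) 1, ∀ (j : Fin n) (hj : (j:ℕ)+1 < n) (a : ℝ),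
      (WithLp.toLp 2 (fun i => f i x) : EuclideanSpace ℝ (Fin n)) = a • Vv π j + (1-a) • Vv π ⟨(j:ℕ)+1, hj⟩ →
      Phi π (WithLp.toLp 2 (fun i => f i x)) = ((j:ℕ):ℝ)+1-a := by
    intro x hx j hj a heq
    have hv : ((⟨(j:ℕ)+1, hj⟩ : Fin n) : ℕ) = (j:ℕ)+1 := rfl
    rw [heq, Phi_rep, hv]
    push_cast; ring
  have hinjPhi : Set.InjOn (fun x => Phi π (WithLp.toLp 2 (fun i => f i x))) (Set.Icc 0 1) := by
    intro x hx y hy hxy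
    have hxy' : Phi π (WithLp.toLp 2 (fun i => f i x)) = Phi π (WithLp.toLp 2 (fun i => f i y)) := hxy
    obtain ⟨j, hj, a, ha, heqx⟩ := hrep x hx
    obtain ⟨j', hj', a', ha', heqy⟩ := hrep y hy
    have hcx := hvalP x hx j hj a heqx
    have hb1 : ((j:ℕ):ℝ) ≤ Phi π (WithLp.toLp 2 (fun i => f i x)) := by rw [hcx]; linarith [ha.2]
    have hb2 : Phi π (WithLp.toLp 2 (fun i => f i x)) ≤ ((j:ℕ):ℝ)+1 := by rw [hcx]; linarith [ha.1]
    have hpx := pinP π hj hj ha heqx hb1 hb2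
    have hpy := pinP π hj hj' ha' heqy (by rw [← hxy']; exact hb1) (by rw [← hxy']; exact hb2)
    rw [← hxy'] at hpy
    exact hinj hx hy (hpx.trans hpy.symm)
  have hcPhi : ContinuousOn (fun x => Phi π (WithLp.toLp 2 (fun i => f i x))) (Icc (0:ℝ) 1) := by
    apply continuousOn_finset_sum
    intro k _
    exact (continuousOn_const.mul (hcont (π k)))
  rcases le_total (Phi π (WithLp.toLp 2 (fun i => f i 0))) (Phi π (WithLp.toLp 2 (fun i => f i 1))) with hle | hle
  · have hm : StrictMonoOn (fun x => Phi π (WithLp.toLp 2 (fun i => f i x))) (Icc (0:ℝ) 1) :=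
      ContinuousOn.strictMonoOn_of_injOn_Icc zero_le_one hle hcPhi hinjPhi
    obtain ⟨t, ht⟩ := backward_mono hn f hcont π hinj him hm
    exact ⟨π, t, ht⟩
  · have ha : StrictAntiOn (fun x => Phi π (WithLp.toLp 2 (fun i => f i x))) (Icc (0:ℝ) 1) :=
      ContinuousOn.strictAntiOn_of_injOn_Icc zero_le_one hle hcPhi hinjPhi
    set σ' : Equiv.Perm (Fin n) := (revPerm n).trans π with hσ'
    have him' : (fun x => (WithLp.toLp 2 (fun i => f i x) : EuclideanSpace ℝ (Fin n))) '' (Set.Icc 0 1) =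
        ⋃ i : Fin n, ⋃ hi : (i : ℕ) + 1 < n,
          segment ℝ (EuclideanSpace.single (σ' i) 1)
            (EuclideanSpace.single (σ' ⟨(i : ℕ) + 1, hi⟩) 1) :=
      him.trans (rev_union hn π).symm
    have hsum : ∀ x ∈ Icc (0:ℝ) 1,
        ∑ k : Fin n, (WithLp.toLp 2 (fun i => f i x) : EuclideanSpace ℝ (Fin n)) k = 1 := by
      intro x hx
      obtain ⟨j, hj, a, haa, heq⟩ := hrep x hx
      rw [heq]
      exact sum_coord π j ⟨(j:ℕ)+1, hj⟩ a
    have hmono' : StrictMonoOn (fun x => Phi σ' (WithLp.toLp 2 (fun i => f i x))) (Icc (0:ℝ) 1) := by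
      intro x hx y hy hxy
      have hax := phi_rev hn π (WithLp.toLp 2 (fun i => f i x)) (hsum x hx)
      have hay := phi_rev hn π (WithLp.toLp 2 (fun i => f i y)) (hsum y hy)
      have hlt : Phi π (WithLp.toLp 2 (fun i => f i y)) < Phi π (WithLp.toLp 2 (fun i => f i x)) := ha hx hy hxy
      show Phi σ' (WithLp.toLp 2 (fun i => f i x)) < Phi σ' (WithLp.toLp 2 (fun i => f i y))
      rw [hσ', hax, hay]
      linarith
    obtain ⟨t, ht⟩ := backward_mono hn f hcont σ' hinj him' hmono'
    exact ⟨σ', t, ht⟩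

/-- Theorem I, (i) ⇔ (iii): `P = {f_1,…,f_n}` is a pseudo-triangular basis iff
`T_P : [0,1] → [0,1]^n` is injective and its range is a Hamiltonian path
`⋃_{i=1}^{n−1} conv{e_{π(i)}, e_{π(i+1)}}` on the 1-skeleton of `Δ_n`. -/
theorem stmt12 (n : ℕ) (hn : 2 ≤ n) (f : Fin n → ℝ → ℝ)
    (hcont : ∀ i, ContinuousOn (f i) (Set.Icc 0 1))
    (hmap : ∀ i, Set.MapsTo (f i) (Set.Icc 0 1) (Set.Icc 0 1)) :
    (∃ σ : Equiv.Perm (Fin n), ∃ t : Fin n → ℝ,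
      StrictMono t ∧ t ⟨0, by omega⟩ = 0 ∧ t ⟨n - 1, by omega⟩ = 1 ∧
      ∀ i : Fin n, ∀ hi : (i : ℕ) + 1 < n,
        (f (σ i) (t i) = 1 ∧ f (σ i) (t ⟨(i : ℕ) + 1, hi⟩) = 0) ∧
        (∀ j : Fin n, j ≠ i → j ≠ ⟨(i : ℕ) + 1, hi⟩ →
          ∀ x ∈ Set.Icc (t i) (t ⟨(i : ℕ) + 1, hi⟩), f (σ j) x = 0) ∧
        (∀ x ∈ Set.Icc (t i) (t ⟨(i : ℕ) + 1, hi⟩),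
          f (σ ⟨(i : ℕ) + 1, hi⟩) x = 1 - f (σ i) x) ∧
        (Set.BijOn (f (σ i)) (Set.Icc (t i) (t ⟨(i : ℕ) + 1, hi⟩)) (Set.Icc 0 1) ∧
         Set.BijOn (f (σ ⟨(i : ℕ) + 1, hi⟩))
           (Set.Icc (t i) (t ⟨(i : ℕ) + 1, hi⟩)) (Set.Icc 0 1))) ↔
    (Set.InjOn (fun x => (WithLp.toLp 2 (fun i => f i x) : EuclideanSpace ℝ (Fin n)))
        (Set.Icc 0 1) ∧
      ∃ π : Equiv.Perm (Fin n),
        (fun x => (WithLp.toLp 2 (fun i => f i x) : EuclideanSpace ℝ (Fin n))) '' (Set.Icc 0 1) =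
          ⋃ i : Fin n, ⋃ hi : (i : ℕ) + 1 < n,
            segment ℝ (EuclideanSpace.single (π i) 1)
              (EuclideanSpace.single (π ⟨(i : ℕ) + 1, hi⟩) 1)) := by
  constructor
  · rintro ⟨σ, t, h1, h2, h3, h4⟩
    obtain ⟨hi, him⟩ := forward hn f hmap σ t h1 h2 h3 h4
    exact ⟨hi, σ, him⟩
  · rintro ⟨hinj, π, him⟩
    exact stmt12_aux hn f hcont hinj π him
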